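/- If γ is a continuous symmetric linear functional on ℓ∞, then γ vanishes on every sequence of 0's and 1's that has infinitely many 0's and infinitely many 1's. -/

import Mathlib

open Classical in
/-- Indicator of a set of naturals as a bounded continuous function. -/
noncomputable def indBCF (S : Set ℕ) : BoundedContinuousFunction ℕ ℝ :=
  ⟨⟨fun n => if n ∈ S then 1 else 0, continuous_of_discreteTopology⟩, 1, by
    intro a b
    dsimp
    split_ifs <;> simp [Real.dist_eq]⟩

open Classical in
lemma indBCF_apply (S : Set ℕ) (n : ℕ) : indBCF S n = if n ∈ S then 1 else 0 := rfl

lemma exists_perm_of_infinite (S T : Set ℕ) (hS : S.Infinite) (hSc : Sᶜ.Infinite)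
    (hT : T.Infinite) (hTc : Tᶜ.Infinite) :
    ∃ σ : Equiv.Perm ℕ, ∀ n, (σ n ∈ S ↔ n ∈ T) := by
  classical
  haveI : Infinite S := hS.to_subtype
  haveI : Infinite T := hT.to_subtype
  haveI : Infinite ↥Sᶜ := hSc.to_subtype
  haveI : Infinite ↥Tᶜ := hTc.to_subtype
  obtain ⟨dS⟩ : Nonempty (Denumerable S) := nonempty_denumerable_iff.mpr ⟨inferInstance, inferInstance⟩
  obtain ⟨dT⟩ : Nonempty (Denumerable T) := nonempty_denumerable_iff.mpr ⟨inferInstance, inferInstance⟩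
  obtain ⟨dSc⟩ : Nonempty (Denumerable ↥Sᶜ) := nonempty_denumerable_iff.mpr ⟨inferInstance, inferInstance⟩
  obtain ⟨dTc⟩ : Nonempty (Denumerable ↥Tᶜ) := nonempty_denumerable_iff.mpr ⟨inferInstance, inferInstance⟩
  let e1 : T ≃ S := (@Denumerable.eqv _ dT).trans (@Denumerable.eqv _ dS).symm
  let e2 : ↥Tᶜ ≃ ↥Sᶜ := (@Denumerable.eqv _ dTc).trans (@Denumerable.eqv _ dSc).symm
  refine ⟨((Equiv.Set.sumCompl T).symm.trans (Equiv.sumCongr e1 e2)).trans (Equiv.Set.sumCompl S), ?_⟩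
  intro n
  by_cases hn : n ∈ T
  · have h1 : (Equiv.Set.sumCompl T).symm ↑(⟨n, hn⟩ : T) = Sum.inl ⟨n, hn⟩ :=
      Equiv.Set.sumCompl_symm_apply ⟨n, hn⟩
    simp [h1, hn, (e1 ⟨n, hn⟩).2]
  · have hn' : n ∈ Tᶜ := hn
    have h1 : (Equiv.Set.sumCompl T).symm ↑(⟨n, hn'⟩ : ↥Tᶜ) = Sum.inr ⟨n, hn'⟩ :=
      Equiv.Set.sumCompl_symm_apply_compl ⟨n, hn'⟩
    have h2 := (e2 ⟨n, hn'⟩).2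
    simp only [Set.mem_compl_iff] at h2
    simp [h1, hn, h2]

lemma gamma_indBCF_eq (γ : BoundedContinuousFunction ℕ ℝ →L[ℝ] ℝ)
    (hsym : ∀ (x y : BoundedContinuousFunction ℕ ℝ) (σ : Equiv.Perm ℕ),
      (∀ n, y n = x (σ n)) → γ y = γ x)
    (S T : Set ℕ) (hS : S.Infinite) (hSc : Sᶜ.Infinite)
    (hT : T.Infinite) (hTc : Tᶜ.Infinite) :
    γ (indBCF T) = γ (indBCF S) := by
  obtain ⟨σ, hσ⟩ := exists_perm_of_infinite S T hS hSc hT hTc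
  refine hsym (indBCF S) (indBCF T) σ fun n => ?_
  rw [indBCF_apply, indBCF_apply]
  by_cases hn : n ∈ T
  · simp [hn, (hσ n).mpr hn]
  · have : σ n ∉ S := fun h => hn ((hσ n).mp h)
    simp [hn, this]

/-- If `γ` is a continuous symmetric linear functional on `ℓ∞`, then `γ` vanishes on
every sequence of 0's and 1's having infinitely many 0's and infinitely many 1's. -/
theorem symmetric_functional_vanishes_on_01
    (γ : BoundedContinuousFunction ℕ ℝ →L[ℝ] ℝ)
    (hsym : ∀ (x y : BoundedContinuousFunction ℕ ℝ) (σ : Equiv.Perm ℕ),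
      (∀ n, y n = x (σ n)) → γ y = γ x)
    (x : BoundedContinuousFunction ℕ ℝ)
    (h01 : ∀ n, x n = 0 ∨ x n = 1)
    (h0 : {n | x n = 0}.Infinite)
    (h1 : {n | x n = 1}.Infinite) :
    γ x = 0 := by
  classical
  set S : Set ℕ := {n | x n = 1} with hSdef
  have hS : S.Infinite := h1
  have hsub : {n | x n = 0} ⊆ Sᶜ := by
    intro n hn
    simp only [Set.mem_compl_iff, hSdef, Set.mem_setOf_eq] at *
    rw [hn]; norm_num
  have hSc : Sᶜ.Infinite := h0.mono hsub
  -- x equals the indicator of S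
  have hx : x = indBCF S := by
    ext n
    rw [indBCF_apply]
    rcases h01 n with h | h
    · have : n ∉ S := by simp [hSdef, h]
      simp [this, h]
    · have : n ∈ S := h
      simp [this, h]
  -- split S into two infinite pieces
  haveI : Infinite S := hS.to_subtype
  obtain ⟨dS⟩ : Nonempty (Denumerable S) := nonempty_denumerable_iff.mpr ⟨inferInstance, inferInstance⟩
  let e : ℕ ≃ S := (@Denumerable.eqv _ dS).symm
  let g : ℕ → ℕ := fun k => ((e k : S) : ℕ)
  have hinj : Function.Injective g := fun a b hab => e.injective (Subtype.val_injective hab)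
  let A : Set ℕ := Set.range (fun k => g (2 * k))
  have hAS : A ⊆ S := by rintro n ⟨m, rfl⟩; exact (e (2 * m)).2
  have hA : A.Infinite :=
    Set.infinite_range_of_injective (fun a b hab => by
      have := hinj hab; omega)
  have hAc : Aᶜ.Infinite := hSc.mono (Set.compl_subset_compl.mpr hAS)
  have hsub2 : Set.range (fun k => g (2 * k + 1)) ⊆ S \ A := by
    rintro n ⟨k, rfl⟩
    refine ⟨(e (2 * k + 1)).2, ?_⟩
    rintro ⟨m, hm⟩
    have := hinj hm
    omega
  have hB : (S \ A).Infinite :=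
    (Set.infinite_range_of_injective (f := fun k => g (2 * k + 1)) (fun a b hab => by
      have := hinj hab; omega)).mono hsub2
  have hBc : (S \ A)ᶜ.Infinite := hSc.mono (by intro n hn; simp [Set.mem_compl_iff] at *; tauto)
  -- indicator sum
  have hsum : indBCF A + indBCF (S \ A) = indBCF S := by
    ext n
    simp only [BoundedContinuousFunction.coe_add, Pi.add_apply, indBCF_apply]
    by_cases hnA : n ∈ A
    · have : n ∈ S := hAS hnA
      simp [hnA, this, Set.mem_diff]
    · by_cases hnS : n ∈ S
      · simp [hnA, hnS, Set.mem_diff]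
      · have : n ∉ S \ A := fun h => hnS h.1
        simp [hnA, hnS, this]
  have hγA : γ (indBCF A) = γ (indBCF S) := gamma_indBCF_eq γ hsym S A hS hSc hA hAc
  have hγB : γ (indBCF (S \ A)) = γ (indBCF S) := gamma_indBCF_eq γ hsym S (S \ A) hS hSc hB hBc
  have : γ (indBCF S) + γ (indBCF S) = γ (indBCF S) := by
    calc γ (indBCF S) + γ (indBCF S) = γ (indBCF A) + γ (indBCF (S \ A)) := by rw [hγA, hγB]
    _ = γ (indBCF A + indBCF (S \ A)) := (map_add γ _ _).symm
    _ = γ (indBCF S) := by rw [hsum]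
  have hz : γ (indBCF S) = 0 := by linarith
  rw [hx, hz]
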